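/- (Closure of the set of pivots under products.) Let A be an associative unital ℂ-algebra and V ⊆ A a ℂ-linear subspace with 1 ∈ V. Suppose M is a k×k matrix with entries in V admitting an admissible decomposition with pivot Δ₁, and N is an l×l matrix with entries in V admitting an admissible decomposition with pivot Δ₂. Then there exists a (k+l)×(k+l) matrix P with all entries in V admitting an admissible decomposition with pivot −Δ₂Δ₁. -/

import Mathlib

/-- A square matrix `M` of size `k` over `A` admits an *admissible decomposition*
with pivot `Δ` if there exist a lower triangular matrix `U` whose diagonal entries
are units with last diagonal entry `1`, and an upper triangular matrix `T` with
diagonal entries `(1, …, 1, Δ)`, such that `U * M = T`. -/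
def HasAdmissibleDecomp {A : Type*} [Ring A] {k : ℕ}
    (M : Matrix (Fin k) (Fin k) A) (Δ : A) : Prop :=
  ∃ U T : Matrix (Fin k) (Fin k) A,
    (∀ i j : Fin k, (i : ℕ) < (j : ℕ) → U i j = 0) ∧
    (∀ i : Fin k, IsUnit (U i i)) ∧
    (∀ i : Fin k, (i : ℕ) = k - 1 → U i i = 1) ∧
    (∀ i j : Fin k, (j : ℕ) < (i : ℕ) → T i j = 0) ∧
    (∀ i : Fin k, (i : ℕ) < k - 1 → T i i = 1) ∧
    (∀ i : Fin k, (i : ℕ) = k - 1 → T i i = Δ) ∧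
    U * M = T

/-! ### Auxiliary constructions -/

/-- Extension of a `k × k` matrix to a function `ℕ → ℕ → A`, zero outside. -/
def ext2 {A : Type*} [Zero A] {k : ℕ} (M : Matrix (Fin k) (Fin k) A) : ℕ → ℕ → A :=
  fun i j => if h : i < k ∧ j < k then M ⟨i, h.1⟩ ⟨j, h.2⟩ else 0

lemma ext2_apply {A : Type*} [Zero A] {k : ℕ} (M : Matrix (Fin k) (Fin k) A)
    (i j : ℕ) (hi : i < k) (hj : j < k) : ext2 M i j = M ⟨i, hi⟩ ⟨j, hj⟩ := by
  simp [ext2, hi, hj]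

lemma ext2_mul {A : Type*} [Ring A] {k : ℕ} {U M T : Matrix (Fin k) (Fin k) A}
    (h : U * M = T) (i j : ℕ) (hi : i < k) (hj : j < k) :
    ∑ r ∈ Finset.range k, ext2 U i r * ext2 M r j = ext2 T i j := by
  have h2 : (U * M) ⟨i, hi⟩ ⟨j, hj⟩ = T ⟨i, hi⟩ ⟨j, hj⟩ := by rw [h]
  rw [Matrix.mul_apply] at h2
  calc ∑ r ∈ Finset.range k, ext2 U i r * ext2 M r j
      = ∑ r : Fin k, ext2 U i ↑r * ext2 M ↑r j :=
        (Fin.sum_univ_eq_sum_range (fun r => ext2 U i r * ext2 M r j) k).symm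
    _ = ∑ r : Fin k, U ⟨i, hi⟩ r * M r ⟨j, hj⟩ := by
        refine Finset.sum_congr rfl fun r _ => ?_
        rw [ext2_apply U i r hi r.isLt, ext2_apply M r j r.isLt hj]
    _ = T ⟨i, hi⟩ ⟨j, hj⟩ := h2
    _ = ext2 T i j := (ext2_apply T i j hi hj).symm

/-- The big matrix `P` (as a function on `ℕ`). Layout of indices: `[0,m)` carries the
leading block of `M`, `[m, m+n)` the leading block of `N`, `m+n` is a special row/column
coupling the last row of `M`, and `m+n+1` couples the last row of `N`. -/
def Pfun {A : Type*} [Ring A] (m n : ℕ) (Mf Nf : ℕ → ℕ → A) : ℕ → ℕ → A := fun i j =>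
  if i < m then (if j < m then Mf i j else if j = m + n + 1 then Mf i m else 0)
  else if i < m + n then
    (if j < m then 0 else if j < m + n then Nf (i - m) (j - m)
     else if j = m + n then Nf (i - m) n else 0)
  else if i = m + n then
    (if j < m then Mf m j else if j = m + n then 1
     else if j = m + n + 1 then Mf m m else 0)
  else
    (if j < m then 0 else if j < m + n then Nf n (j - m)
     else if j = m + n then Nf n n else 0)

/-- The lower triangular matrix for the decomposition of `P`. -/
def Ufun {A : Type*} [Ring A] (m n : ℕ) (U1f U2f : ℕ → ℕ → A) (Δ₂ : A) : ℕ → ℕ → A :=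
  fun i j =>
  if i < m then (if j < m then U1f i j else 0)
  else if i < m + n then
    (if j < m then 0 else if j < m + n then U2f (i - m) (j - m) else 0)
  else if i = m + n then
    (if j < m then U1f m j else if j = m + n then 1 else 0)
  else
    (if j < m then -Δ₂ * U1f m j else if j < m + n then U2f n (j - m)
     else if j = m + n then -Δ₂ else 1)

/-- The upper triangular matrix for the decomposition of `P`. -/
def Tfun {A : Type*} [Ring A] (m n : ℕ) (T1f T2f : ℕ → ℕ → A) (Δ₁ Δ₂ : A) : ℕ → ℕ → A :=
  fun i j =>
  if i < m then (if j < m then T1f i j else if j = m + n + 1 then T1f i m else 0)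
  else if i < m + n then
    (if j < m then 0 else if j < m + n then T2f (i - m) (j - m)
     else if j = m + n then T2f (i - m) n else 0)
  else if i = m + n then
    (if j = m + n then 1 else if j = m + n + 1 then Δ₁ else 0)
  else (if j = m + n + 1 then -(Δ₂ * Δ₁) else 0)

lemma sum_split {A : Type*} [AddCommMonoid A] (m n : ℕ) (f : ℕ → A) :
    ∑ r ∈ Finset.range (m + n + 2), f r =
      (∑ r ∈ Finset.range m, f r) + (∑ t ∈ Finset.range n, f (m + t))
        + f (m + n) + f (m + n + 1) := by
  rw [show m + n + 2 = (m + n + 1) + 1 from rfl, Finset.sum_range_succ,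
    show m + n + 1 = (m + n) + 1 from rfl, Finset.sum_range_succ,
    Finset.sum_range_add]

/-- The key multiplication identity `U * P = T`. -/
lemma bigmul {A : Type*} [Ring A] (m n : ℕ) (U1f Mf T1f U2f Nf T2f : ℕ → ℕ → A)
    (Δ₁ Δ₂ : A)
    (h1 : ∀ i j, i < m + 1 → j < m + 1 →
      ∑ r ∈ Finset.range (m + 1), U1f i r * Mf r j = T1f i j)
    (h2 : ∀ i j, i < n + 1 → j < n + 1 →
      ∑ r ∈ Finset.range (n + 1), U2f i r * Nf r j = T2f i j)
    (hU1lt : ∀ i j, i < j → U1f i j = 0)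
    (hU2lt : ∀ i j, i < j → U2f i j = 0)
    (hU1m : U1f m m = 1) (hU2n : U2f n n = 1)
    (hT1ut : ∀ i j, j < i → T1f i j = 0) (hT2ut : ∀ i j, j < i → T2f i j = 0)
    (hT1m : T1f m m = Δ₁) (hT2n : T2f n n = Δ₂) :
    ∀ i j, i < m + n + 2 → j < m + n + 2 →
      ∑ r ∈ Finset.range (m + n + 2),
          Ufun m n U1f U2f Δ₂ i r * Pfun m n Mf Nf r j
        = Tfun m n T1f T2f Δ₁ Δ₂ i j := by
  intro i j hi hj
  have hmm : ¬ (m + n < m) := by omega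
  have hmm1 : ¬ (m + n + 1 < m) := by omega
  have hmn1 : ¬ (m + n + 1 < m + n) := by omega
  have hmneq : ¬ (m + n + 1 = m + n) := by omega
  have hmnlt : ¬ (m + n < m + n) := by omega
  set f : ℕ → A := fun r => Ufun m n U1f U2f Δ₂ i r * Pfun m n Mf Nf r j with hf
  rw [sum_split m n f]
  by_cases him : i < m
  · -- first block of rows: rows of (the leading part of) M
    have eB : ∑ t ∈ Finset.range n, f (m + t) = 0 := by
      refine Finset.sum_eq_zero fun t ht => ?_
      have h1' : ¬ (m + t < m) := by omega
      simp [hf, Ufun, him, h1']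
    have eC : f (m + n) = 0 := by simp [hf, Ufun, him, hmm]
    have eD : f (m + n + 1) = 0 := by simp [hf, Ufun, him, hmm1]
    rw [eB, eC, eD, add_zero, add_zero, add_zero]
    by_cases hjm : j < m
    · have eA : ∑ r ∈ Finset.range m, f r
          = ∑ r ∈ Finset.range m, U1f i r * Mf r j := by
        refine Finset.sum_congr rfl fun r hr => ?_
        rw [Finset.mem_range] at hr
        simp [hf, Ufun, Pfun, him, hr, hjm]
      have hx := h1 i j (by omega) (by omega)
      rw [Finset.sum_range_succ, hU1lt i m him, zero_mul, add_zero] at hx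
      rw [eA, hx]
      simp [Tfun, him, hjm]
    · by_cases hjl : j = m + n + 1
      · have eA : ∑ r ∈ Finset.range m, f r
            = ∑ r ∈ Finset.range m, U1f i r * Mf r m := by
          refine Finset.sum_congr rfl fun r hr => ?_
          rw [Finset.mem_range] at hr
          simp [hf, Ufun, Pfun, him, hr, hjl, hmm1]
        have hx := h1 i m (by omega) (by omega)
        rw [Finset.sum_range_succ, hU1lt i m him, zero_mul, add_zero] at hx
        rw [eA, hx]
        simp [Tfun, him, hjl, hmm1]
      · have eA : ∑ r ∈ Finset.range m, f r = 0 := by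
          refine Finset.sum_eq_zero fun r hr => ?_
          rw [Finset.mem_range] at hr
          simp [hf, Ufun, Pfun, him, hr, hjm, hjl]
        rw [eA]
        simp [Tfun, him, hjm, hjl]
  · by_cases hin : i < m + n
    · -- second block of rows: rows of (the leading part of) N
      have eA : ∑ r ∈ Finset.range m, f r = 0 := by
        refine Finset.sum_eq_zero fun r hr => ?_
        rw [Finset.mem_range] at hr
        simp [hf, Ufun, him, hin, hr]
      have eC : f (m + n) = 0 := by
        simp [hf, Ufun, him, hin, hmm, hmnlt]
      have eD : f (m + n + 1) = 0 := by
        simp [hf, Ufun, him, hin, hmm1, hmn1, hmneq]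
      rw [eA, eC, eD, zero_add, add_zero, add_zero]
      by_cases hjm : j < m
      · have eB : ∑ t ∈ Finset.range n, f (m + t) = 0 := by
          refine Finset.sum_eq_zero fun t ht => ?_
          rw [Finset.mem_range] at ht
          have h1' : ¬ (m + t < m) := by omega
          have h2' : m + t < m + n := by omega
          simp [hf, Ufun, Pfun, him, hin, h1', h2', hjm]
        rw [eB]
        simp [Tfun, him, hin, hjm]
      · by_cases hjn : j < m + n
        · have eB : ∑ t ∈ Finset.range n, f (m + t)
              = ∑ t ∈ Finset.range n, U2f (i - m) t * Nf t (j - m) := by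
            refine Finset.sum_congr rfl fun t ht => ?_
            rw [Finset.mem_range] at ht
            have h1' : ¬ (m + t < m) := by omega
            have h2' : m + t < m + n := by omega
            simp [hf, Ufun, Pfun, him, hin, h1', h2', hjm, hjn]
          have hx := h2 (i - m) (j - m) (by omega) (by omega)
          rw [Finset.sum_range_succ, hU2lt (i - m) n (by omega), zero_mul,
            add_zero] at hx
          rw [eB, hx]
          simp [Tfun, him, hin, hjm, hjn]
        · by_cases hje : j = m + n
          · have eB : ∑ t ∈ Finset.range n, f (m + t)
                = ∑ t ∈ Finset.range n, U2f (i - m) t * Nf t n := by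
              refine Finset.sum_congr rfl fun t ht => ?_
              rw [Finset.mem_range] at ht
              have h1' : ¬ (m + t < m) := by omega
              have h2' : m + t < m + n := by omega
              simp [hf, Ufun, Pfun, him, hin, h1', h2', hje, hmm, hmnlt]
            have hx := h2 (i - m) n (by omega) (by omega)
            rw [Finset.sum_range_succ, hU2lt (i - m) n (by omega), zero_mul,
              add_zero] at hx
            rw [eB, hx]
            simp [Tfun, him, hin, hje, hmm, hmnlt]
          · have hj1 : j = m + n + 1 := by omega
            have eB : ∑ t ∈ Finset.range n, f (m + t) = 0 := by
              refine Finset.sum_eq_zero fun t ht => ?_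
              rw [Finset.mem_range] at ht
              have h1' : ¬ (m + t < m) := by omega
              have h2' : m + t < m + n := by omega
              simp [hf, Ufun, Pfun, him, hin, h1', h2', hj1, hmm1, hmn1, hmneq]
            rw [eB]
            simp [Tfun, him, hin, hj1, hmm1, hmn1, hmneq]
    · by_cases hie : i = m + n
      · -- the special row coupling the last row of M
        have eB : ∑ t ∈ Finset.range n, f (m + t) = 0 := by
          refine Finset.sum_eq_zero fun t ht => ?_
          rw [Finset.mem_range] at ht
          have h1' : ¬ (m + t < m) := by omega
          have h2' : ¬ (m + t = m + n) := by omega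
          simp [hf, Ufun, hie, hmm, hmnlt, h1', h2', show ¬ (t = n) by omega]
        rw [eB, add_zero]
        by_cases hjm : j < m
        · have eA : ∑ r ∈ Finset.range m, f r
              = ∑ r ∈ Finset.range m, U1f m r * Mf r j := by
            refine Finset.sum_congr rfl fun r hr => ?_
            rw [Finset.mem_range] at hr
            simp [hf, Ufun, Pfun, hie, hmm, hmnlt, hr, hjm]
          have eC : f (m + n) = Mf m j := by
            simp [hf, Ufun, Pfun, hie, hmm, hmnlt, hjm]
          have eD : f (m + n + 1) = 0 := by
            simp [hf, Ufun, hie, hmm, hmnlt, hmm1, hmneq]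
          rw [eA, eC, eD, add_zero]
          have hx := h1 m j (by omega) (by omega)
          rw [Finset.sum_range_succ, hU1m, one_mul] at hx
          rw [hx, hT1ut m j hjm]
          have : ¬ (j = m + n) := by omega
          have h2' : ¬ (j = m + n + 1) := by omega
          simp [Tfun, hie, hmm, hmnlt, this, h2']
        · by_cases hje : j = m + n
          · have eA : ∑ r ∈ Finset.range m, f r = 0 := by
              refine Finset.sum_eq_zero fun r hr => ?_
              rw [Finset.mem_range] at hr
              simp [hf, Ufun, Pfun, hie, hmm, hmnlt, hr, hje, hmneq]
            have eC : f (m + n) = 1 := by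
              simp [hf, Ufun, Pfun, hie, hje, hmm, hmnlt]
            have eD : f (m + n + 1) = 0 := by
              simp [hf, Ufun, hie, hmm, hmnlt, hmm1, hmneq]
            rw [eA, eC, eD, zero_add, add_zero]
            simp [Tfun, hie, hje, hmm, hmnlt]
          · by_cases hj1 : j = m + n + 1
            · have eA : ∑ r ∈ Finset.range m, f r
                  = ∑ r ∈ Finset.range m, U1f m r * Mf r m := by
                refine Finset.sum_congr rfl fun r hr => ?_
                rw [Finset.mem_range] at hr
                simp [hf, Ufun, Pfun, hie, hmm, hmnlt, hr, hj1, hmm1]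
              have eC : f (m + n) = Mf m m := by
                simp [hf, Ufun, Pfun, hie, hj1, hmm, hmnlt, hmm1, hmneq]
              have eD : f (m + n + 1) = 0 := by
                simp [hf, Ufun, hie, hmm, hmnlt, hmm1, hmneq]
              rw [eA, eC, eD, add_zero]
              have hx := h1 m m (by omega) (by omega)
              rw [Finset.sum_range_succ, hU1m, one_mul] at hx
              rw [hx, hT1m]
              simp [Tfun, hie, hj1, hmm, hmnlt, hmm1, hmneq]
            · have eA : ∑ r ∈ Finset.range m, f r = 0 := by
                refine Finset.sum_eq_zero fun r hr => ?_
                rw [Finset.mem_range] at hr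
                simp [hf, Ufun, Pfun, hie, hmm, hmnlt, hr, hjm, hj1]
              have eC : f (m + n) = 0 := by
                simp [hf, Ufun, Pfun, hie, hmm, hmnlt, hjm, hje, hj1]
              have eD : f (m + n + 1) = 0 := by
                simp [hf, Ufun, hie, hmm, hmnlt, hmm1, hmneq]
              rw [eA, eC, eD]
              simp [Tfun, hie, hmm, hmnlt, hje, hj1]
      · -- the last row, coupling the last row of N
        have hi1 : i = m + n + 1 := by omega
        by_cases hjm : j < m
        · have eA : ∑ r ∈ Finset.range m, f r
              = ∑ r ∈ Finset.range m, -Δ₂ * (U1f m r * Mf r j) := by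
            refine Finset.sum_congr rfl fun r hr => ?_
            rw [Finset.mem_range] at hr
            simp [hf, Ufun, Pfun, hi1, hmm1, hmn1, hmneq, hr, hjm, mul_assoc]
          have eB : ∑ t ∈ Finset.range n, f (m + t) = 0 := by
            refine Finset.sum_eq_zero fun t ht => ?_
            rw [Finset.mem_range] at ht
            have h1' : ¬ (m + t < m) := by omega
            have h2' : m + t < m + n := by omega
            simp [hf, Pfun, h1', h2', hjm]
          have eC : f (m + n) = -Δ₂ * Mf m j := by
            simp [hf, Ufun, Pfun, hi1, hmm1, hmn1, hmneq, hmm, hmnlt, hjm]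
          have eD : f (m + n + 1) = 0 := by
            simp [hf, Pfun, hmm1, hmn1, hmneq, hjm]
          rw [eA, eB, eC, eD, add_zero, add_zero, ← Finset.mul_sum]
          have hx := h1 m j (by omega) (by omega)
          rw [Finset.sum_range_succ, hU1m, one_mul] at hx
          rw [show -Δ₂ * (∑ r ∈ Finset.range m, U1f m r * Mf r j) + -Δ₂ * Mf m j
              = -Δ₂ * ((∑ r ∈ Finset.range m, U1f m r * Mf r j) + Mf m j) from
            (mul_add _ _ _).symm, hx, hT1ut m j hjm, mul_zero]
          have h2' : ¬ (j = m + n + 1) := by omega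
          simp [Tfun, hi1, hmm1, hmn1, hmneq, h2']
        · by_cases hjn : j < m + n
          · have eA : ∑ r ∈ Finset.range m, f r = 0 := by
              refine Finset.sum_eq_zero fun r hr => ?_
              rw [Finset.mem_range] at hr
              simp [hf, Pfun, hr, hjm, show ¬ (j = m + n + 1) by omega]
            have eB : ∑ t ∈ Finset.range n, f (m + t)
                = ∑ t ∈ Finset.range n, U2f n t * Nf t (j - m) := by
              refine Finset.sum_congr rfl fun t ht => ?_
              rw [Finset.mem_range] at ht
              have h1' : ¬ (m + t < m) := by omega
              have h2' : m + t < m + n := by omega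
              simp [hf, Ufun, Pfun, hi1, hmm1, hmn1, hmneq, h1', h2', hjm, hjn]
            have eC : f (m + n) = 0 := by
              simp [hf, Pfun, hmm, hmnlt, hjm, show ¬ (j = m + n) by omega,
                show ¬ (j = m + n + 1) by omega]
            have eD : f (m + n + 1) = Nf n (j - m) := by
              simp [hf, Ufun, Pfun, hi1, hmm1, hmn1, hmneq, hjm, hjn]
            rw [eA, eB, eC, eD, zero_add, add_zero]
            have hx := h2 n (j - m) (by omega) (by omega)
            rw [Finset.sum_range_succ, hU2n, one_mul] at hx
            rw [hx, hT2ut n (j - m) (by omega)]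
            simp [Tfun, hi1, hmm1, hmn1, hmneq, hjm, hjn,
              show ¬ (j = m + n + 1) by omega]
          · by_cases hje : j = m + n
            · have eA : ∑ r ∈ Finset.range m, f r = 0 := by
                refine Finset.sum_eq_zero fun r hr => ?_
                rw [Finset.mem_range] at hr
                simp [hf, Pfun, hr, hje, hmm, hmneq]
              have eB : ∑ t ∈ Finset.range n, f (m + t)
                  = ∑ t ∈ Finset.range n, U2f n t * Nf t n := by
                refine Finset.sum_congr rfl fun t ht => ?_
                rw [Finset.mem_range] at ht
                have h1' : ¬ (m + t < m) := by omega
                have h2' : m + t < m + n := by omega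
                simp [hf, Ufun, Pfun, hi1, hmm1, hmn1, hmneq, h1', h2', hje,
                  hmm, hmnlt]
              have eC : f (m + n) = -Δ₂ := by
                simp [hf, Ufun, Pfun, hi1, hmm1, hmn1, hmneq, hje, hmm, hmnlt]
              have eD : f (m + n + 1) = Nf n n := by
                simp [hf, Ufun, Pfun, hi1, hmm1, hmn1, hmneq, hje, hmm, hmnlt]
              rw [eA, eB, eC, eD, zero_add]
              have hx := h2 n n (by omega) (by omega)
              rw [Finset.sum_range_succ, hU2n, one_mul] at hx
              rw [show (∑ t ∈ Finset.range n, U2f n t * Nf t n) + -Δ₂ + Nf n n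
                  = ((∑ t ∈ Finset.range n, U2f n t * Nf t n) + Nf n n) + -Δ₂ by
                abel, hx, hT2n, add_neg_cancel]
              simp [Tfun, hi1, hje, hmm1, hmn1, hmneq]
            · have hj1 : j = m + n + 1 := by omega
              have eA : ∑ r ∈ Finset.range m, f r
                  = ∑ r ∈ Finset.range m, -Δ₂ * (U1f m r * Mf r m) := by
                refine Finset.sum_congr rfl fun r hr => ?_
                rw [Finset.mem_range] at hr
                simp [hf, Ufun, Pfun, hi1, hmm1, hmn1, hmneq, hr, hj1,
                  mul_assoc]
              have eB : ∑ t ∈ Finset.range n, f (m + t) = 0 := by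
                refine Finset.sum_eq_zero fun t ht => ?_
                rw [Finset.mem_range] at ht
                have h1' : ¬ (m + t < m) := by omega
                have h2' : m + t < m + n := by omega
                simp [hf, Pfun, h1', h2', hj1, hmm1, hmn1, hmneq]
              have eC : f (m + n) = -Δ₂ * Mf m m := by
                simp [hf, Ufun, Pfun, hi1, hmm1, hmn1, hmneq, hj1, hmm, hmnlt]
              have eD : f (m + n + 1) = 0 := by
                simp [hf, Ufun, Pfun, hi1, hmm1, hmn1, hmneq, hj1]
              rw [eA, eB, eC, eD, add_zero, add_zero, ← Finset.mul_sum]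
              have hx := h1 m m (by omega) (by omega)
              rw [Finset.sum_range_succ, hU1m, one_mul] at hx
              rw [show -Δ₂ * (∑ r ∈ Finset.range m, U1f m r * Mf r m)
                  + -Δ₂ * Mf m m
                  = -Δ₂ * ((∑ r ∈ Finset.range m, U1f m r * Mf r m) + Mf m m) from
                (mul_add _ _ _).symm, hx, hT1m]
              simp [Tfun, hi1, hj1, hmm1, hmn1, hmneq]

set_option maxHeartbeats 2000000 in
/-- Closure of the set of pivots under products: if `M` (size `k`) has pivot `Δ₁`
and `N` (size `l`) has pivot `Δ₂`, both with entries in `V`, then there is a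
`(k+l)×(k+l)` matrix with entries in `V` with pivot `-Δ₂ * Δ₁`. -/
theorem pivot_product_closure {A : Type*} [Ring A] [Algebra ℂ A]
    (V : Submodule ℂ A) (hV1 : (1 : A) ∈ V)
    (k l : ℕ) (hk : 1 ≤ k) (hl : 1 ≤ l)
    (M : Matrix (Fin k) (Fin k) A) (hMV : ∀ i j, M i j ∈ V)
    (N : Matrix (Fin l) (Fin l) A) (hNV : ∀ i j, N i j ∈ V)
    (Δ₁ Δ₂ : A) (hM : HasAdmissibleDecomp M Δ₁) (hN : HasAdmissibleDecomp N Δ₂) :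
    ∃ P : Matrix (Fin (k + l)) (Fin (k + l)) A,
      (∀ i j, P i j ∈ V) ∧ HasAdmissibleDecomp P (-(Δ₂ * Δ₁)) := by
  obtain ⟨U₁, T₁, hU1lt, hU1u, hU1d, hT1ut, hT1one, hT1piv, hUM⟩ := hM
  obtain ⟨U₂, T₂, hU2lt, hU2u, hU2d, hT2ut, hT2one, hT2piv, hUN⟩ := hN
  set m := k - 1 with hm
  set n := l - 1 with hn
  have hkm : k = m + 1 := by omega
  have hln : l = n + 1 := by omega
  have hkl : k + l = m + n + 2 := by omega
  -- ℕ-extended matrices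
  set U1f := ext2 U₁ with hU1f
  set Mf := ext2 M with hMf
  set T1f := ext2 T₁ with hT1f
  set U2f := ext2 U₂ with hU2f
  set Nf := ext2 N with hNf
  set T2f := ext2 T₂ with hT2f
  have h1 : ∀ i j, i < m + 1 → j < m + 1 →
      ∑ r ∈ Finset.range (m + 1), U1f i r * Mf r j = T1f i j := by
    intro i j hi hj
    rw [← hkm] at hi hj ⊢
    exact ext2_mul hUM i j hi hj
  have h2 : ∀ i j, i < n + 1 → j < n + 1 →
      ∑ r ∈ Finset.range (n + 1), U2f i r * Nf r j = T2f i j := by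
    intro i j hi hj
    rw [← hln] at hi hj ⊢
    exact ext2_mul hUN i j hi hj
  have hU1lt' : ∀ i j, i < j → U1f i j = 0 := by
    intro i j hij
    rw [hU1f, ext2]
    split
    · next h => exact hU1lt ⟨i, h.1⟩ ⟨j, h.2⟩ hij
    · rfl
  have hU2lt' : ∀ i j, i < j → U2f i j = 0 := by
    intro i j hij
    rw [hU2f, ext2]
    split
    · next h => exact hU2lt ⟨i, h.1⟩ ⟨j, h.2⟩ hij
    · rfl
  have hT1ut' : ∀ i j, j < i → T1f i j = 0 := by
    intro i j hij
    rw [hT1f, ext2]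
    split
    · next h => exact hT1ut ⟨i, h.1⟩ ⟨j, h.2⟩ hij
    · rfl
  have hT2ut' : ∀ i j, j < i → T2f i j = 0 := by
    intro i j hij
    rw [hT2f, ext2]
    split
    · next h => exact hT2ut ⟨i, h.1⟩ ⟨j, h.2⟩ hij
    · rfl
  have hmk : m < k := by omega
  have hnl : n < l := by omega
  have hU1m : U1f m m = 1 := by
    rw [hU1f, ext2_apply U₁ m m hmk hmk]
    exact hU1d ⟨m, hmk⟩ (by simp [hm])
  have hU2n : U2f n n = 1 := by
    rw [hU2f, ext2_apply U₂ n n hnl hnl]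
    exact hU2d ⟨n, hnl⟩ (by simp [hn])
  have hT1m : T1f m m = Δ₁ := by
    rw [hT1f, ext2_apply T₁ m m hmk hmk]
    exact hT1piv ⟨m, hmk⟩ (by simp [hm])
  have hT2n : T2f n n = Δ₂ := by
    rw [hT2f, ext2_apply T₂ n n hnl hnl]
    exact hT2piv ⟨n, hnl⟩ (by simp [hn])
  have hT1one' : ∀ i, i < m → T1f i i = 1 := by
    intro i hi
    rw [hT1f, ext2_apply T₁ i i (by omega) (by omega)]
    exact hT1one ⟨i, by omega⟩ (by simpa [hm])
  have hT2one' : ∀ i, i < n → T2f i i = 1 := by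
    intro i hi
    rw [hT2f, ext2_apply T₂ i i (by omega) (by omega)]
    exact hT2one ⟨i, by omega⟩ (by simpa [hn])
  have hU1u' : ∀ i, i < k → IsUnit (U1f i i) := by
    intro i hi
    rw [hU1f, ext2_apply U₁ i i hi hi]
    exact hU1u ⟨i, hi⟩
  have hU2u' : ∀ i, i < l → IsUnit (U2f i i) := by
    intro i hi
    rw [hU2f, ext2_apply U₂ i i hi hi]
    exact hU2u ⟨i, hi⟩
  have hmm : ¬ (m + n < m) := by omega
  have hmm1 : ¬ (m + n + 1 < m) := by omega
  have hmn1 : ¬ (m + n + 1 < m + n) := by omega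
  have hmneq : ¬ (m + n + 1 = m + n) := by omega
  have hmnlt : ¬ (m + n < m + n) := by omega
  -- membership of extended entries in V
  have hMfV : ∀ i j, Mf i j ∈ V := by
    intro i j
    rw [hMf, ext2]
    split
    · exact hMV _ _
    · exact V.zero_mem
  have hNfV : ∀ i j, Nf i j ∈ V := by
    intro i j
    rw [hNf, ext2]
    split
    · exact hNV _ _
    · exact V.zero_mem
  refine ⟨Matrix.of fun i j : Fin (k + l) => Pfun m n Mf Nf i j, ?_, ?_⟩
  · intro i j
    simp only [Matrix.of_apply, Pfun]
    split_ifs <;> first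
      | exact hMfV _ _
      | exact hNfV _ _
      | exact V.zero_mem
      | exact hV1
  · refine ⟨Matrix.of fun i j : Fin (k + l) => Ufun m n U1f U2f Δ₂ i j,
      Matrix.of fun i j : Fin (k + l) => Tfun m n T1f T2f Δ₁ Δ₂ i j,
      ?_, ?_, ?_, ?_, ?_, ?_, ?_⟩
    · -- U lower triangular
      intro i j hij
      simp only [Matrix.of_apply, Ufun]
      have hjlt : (j : ℕ) < m + n + 2 := by omega
      split_ifs <;> first
        | rfl
        | (exact hU1lt' _ _ (by omega))
        | (exact hU2lt' _ _ (by omega))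
        | omega
    · -- U diagonal entries are units
      intro i
      have hilt : (i : ℕ) < m + n + 2 := by omega
      simp only [Matrix.of_apply, Ufun]
      by_cases him : (i : ℕ) < m
      · simp only [if_pos him]
        exact hU1u' _ (by omega)
      · by_cases hin : (i : ℕ) < m + n
        · rw [if_neg him, if_pos hin, if_neg him, if_pos hin]
          exact hU2u' _ (by omega)
        · by_cases hie : (i : ℕ) = m + n
          · rw [if_neg him, if_neg hin, if_pos hie, if_neg him, if_pos hie]
            exact isUnit_one
          · have : (i : ℕ) = m + n + 1 := by omega
            rw [if_neg him, if_neg hin, if_neg hie, if_neg him, if_neg hin,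
              if_neg hie]
            exact isUnit_one
    · -- last diagonal entry of U is 1
      intro i hi
      have hieq : (i : ℕ) = m + n + 1 := by omega
      simp only [Matrix.of_apply, Ufun, hieq]
      simp [hmm1, hmn1, hmneq]
    · -- T upper triangular
      intro i j hij
      simp only [Matrix.of_apply, Tfun]
      split_ifs <;> first
        | rfl
        | (exact hT1ut' _ _ (by omega))
        | (exact hT2ut' _ _ (by omega))
        | omega
    · -- diagonal entries of T below the last are 1
      intro i hi
      have hilt : (i : ℕ) < m + n + 1 := by omega
      simp only [Matrix.of_apply, Tfun]
      by_cases him : (i : ℕ) < m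
      · rw [if_pos him, if_pos him]
        exact hT1one' _ him
      · by_cases hin : (i : ℕ) < m + n
        · rw [if_neg him, if_pos hin, if_neg him, if_pos hin]
          exact hT2one' _ (by omega)
        · have hie : (i : ℕ) = m + n := by omega
          rw [if_neg him, if_neg hin, if_pos hie]
          rw [if_pos hie]
    · -- last diagonal entry of T
      intro i hi
      have hieq : (i : ℕ) = m + n + 1 := by omega
      simp only [Matrix.of_apply, Tfun, hieq]
      simp [hmm1, hmn1, hmneq]
    · -- U * P = T
      ext i j
      rw [Matrix.mul_apply]
      simp only [Matrix.of_apply]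
      have := bigmul m n U1f Mf T1f U2f Nf T2f Δ₁ Δ₂ h1 h2 hU1lt' hU2lt'
        hU1m hU2n hT1ut' hT2ut' hT1m hT2n i j (by omega) (by omega)
      calc ∑ r : Fin (k + l), Ufun m n U1f U2f Δ₂ i r * Pfun m n Mf Nf r j
          = ∑ r ∈ Finset.range (k + l),
              Ufun m n U1f U2f Δ₂ i r * Pfun m n Mf Nf r j :=
            Fin.sum_univ_eq_sum_range
              (fun r => Ufun m n U1f U2f Δ₂ i r * Pfun m n Mf Nf r j) (k + l)
        _ = ∑ r ∈ Finset.range (m + n + 2),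
              Ufun m n U1f U2f Δ₂ i r * Pfun m n Mf Nf r j := by
            rw [show Finset.range (k + l) = Finset.range (m + n + 2) from by
              rw [hkl]]
        _ = Tfun m n T1f T2f Δ₁ Δ₂ i j := this
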